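/- If f : X → X is a cw-expansive homeomorphism of a compact metric space with cw-expansivity constant 2ε, then for each r > 0 there is k_r ∈ ℕ such that diam(f^n(C^s_ε(x))) ≤ r and diam(f^{−n}(C^u_ε(x))) ≤ r for every x ∈ X and every n ≥ k_r, where C^s_ε(x) and C^u_ε(x) denote the connected components of x in W^s_ε(x) and W^u_ε(x) respectively. -/
import Mathlib


open Topology Filter Metric TopologicalSpace

namespace LS

variable {X Y : Type*} [MetricSpace X] [MetricSpace Y]

/-- finite forward iterates of a homeomorphism -/
def hpowAux (f : X ≃ₜ X) : ℕ → X ≃ₜ X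
  | 0 => Homeomorph.refl X
  | n+1 => (hpowAux f n).trans f

/-- `ℤ`-iterates of a homeomorphism: `hpow f k` is the `k`-th iterate `f^k`. -/
def hpow (f : X ≃ₜ X) : ℤ → X ≃ₜ X
  | Int.ofNat n => hpowAux f n
  | Int.negSucc n => (hpowAux f (n+1)).symm

/-- the `ℤ`-iteration map of `f` -/
def F (f : X ≃ₜ X) : ℤ → X → X := fun k => hpow f k

/-- δ-limit-pseudo-orbit for a system given by its iterate family `T` -/
def IsLimitPseudoOrbit (T : ℤ → Y → Y) (δ : ℝ) (x : ℤ → Y) : Prop :=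
  (∀ k : ℤ, dist (T 1 (x k)) (x (k+1)) ≤ δ) ∧
  Tendsto (fun k : ℤ => dist (T 1 (x k)) (x (k+1))) (cocompact ℤ) (𝓝 0)

/-- `z` ε-limit-shadows the sequence `x` -/
def LimitShadows (T : ℤ → Y → Y) (ε : ℝ) (x : ℤ → Y) (z : Y) : Prop :=
  (∀ k : ℤ, dist (T k z) (x k) ≤ ε) ∧
  Tendsto (fun k : ℤ => dist (T k z) (x k)) (cocompact ℤ) (𝓝 0)

/-- the L-shadowing property -/
def LShadowing (T : ℤ → Y → Y) : Prop :=
  ∀ ε > (0:ℝ), ∃ δ > (0:ℝ), ∀ x : ℤ → Y, IsLimitPseudoOrbit T δ x → ∃ z, LimitShadows T ε x z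

/-- the shadowing property -/
def Shadowing (T : ℤ → Y → Y) : Prop :=
  ∀ ε > (0:ℝ), ∃ δ > (0:ℝ), ∀ x : ℤ → Y,
    (∀ k : ℤ, dist (T 1 (x k)) (x (k+1)) < δ) → ∃ z, ∀ k : ℤ, dist (T k z) (x k) < ε

/-- local c-stable set -/
def Ws (f : X ≃ₜ X) (c : ℝ) (x : X) : Set X :=
  {y | ∀ k : ℤ, 0 ≤ k → dist (F f k y) (F f k x) ≤ c}

/-- local c-unstable set -/
def Wu (f : X ≃ₜ X) (c : ℝ) (x : X) : Set X :=
  {y | ∀ k : ℤ, k ≤ 0 → dist (F f k y) (F f k x) ≤ c}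

/-- stable set -/
def WsA (f : X ≃ₜ X) (x : X) : Set X :=
  {y | Tendsto (fun k : ℤ => dist (F f k y) (F f k x)) atTop (𝓝 0)}

/-- unstable set -/
def WuA (f : X ≃ₜ X) (x : X) : Set X :=
  {y | Tendsto (fun k : ℤ => dist (F f k y) (F f k x)) atBot (𝓝 0)}

/-- asymptotic local stable set -/
def Vs (f : X ≃ₜ X) (c : ℝ) (x : X) : Set X := WsA f x ∩ Ws f c x

/-- asymptotic local unstable set -/
def Vu (f : X ≃ₜ X) (c : ℝ) (x : X) : Set X := WuA f x ∩ Wu f c x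

/-- image of a nonempty compact set under a homeomorphism -/
def himg (f : X ≃ₜ X) (A : NonemptyCompacts X) : NonemptyCompacts X :=
  ⟨⟨f '' A, A.isCompact.image f.continuous⟩, A.nonempty.image f⟩

/-- the `ℤ`-iteration family of the induced hyperspace map `2^f` -/
def HF (f : X ≃ₜ X) : ℤ → NonemptyCompacts X → NonemptyCompacts X :=
  fun k A => himg (hpow f k) A

end LS


namespace LS

variable {X : Type*} [MetricSpace X]

lemma hpowAux_toEquiv (f : X ≃ₜ X) : ∀ n : ℕ, (hpowAux f n).toEquiv = f.toEquiv ^ n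
  | 0 => rfl
  | n+1 => by
    show ((hpowAux f n).trans f).toEquiv = _
    rw [pow_succ']
    ext x
    simp only [Homeomorph.trans_apply, Equiv.Perm.mul_apply]
    show f ((hpowAux f n).toEquiv x) = _
    rw [hpowAux_toEquiv f n]; rfl

lemma hpow_toEquiv (f : X ≃ₜ X) : ∀ k : ℤ, (hpow f k).toEquiv = f.toEquiv ^ k
  | Int.ofNat n => by
    show (hpowAux f n).toEquiv = _
    rw [hpowAux_toEquiv, Int.ofNat_eq_coe, zpow_natCast]
  | Int.negSucc n => by
    show ((hpowAux f (n+1)).symm).toEquiv = _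
    rw [zpow_negSucc, ← hpowAux_toEquiv]
    rfl

lemma F_apply' (f : X ≃ₜ X) (k : ℤ) (x : X) : F f k x = (f.toEquiv ^ k) x := by
  show (hpow f k).toEquiv x = _
  rw [hpow_toEquiv]

lemma F_F (f : X ≃ₜ X) (a b : ℤ) (x : X) : F f a (F f b x) = F f (a+b) x := by
  simp only [F_apply', ← Equiv.Perm.mul_apply, ← zpow_add]

lemma F_continuous (f : X ≃ₜ X) (k : ℤ) : Continuous (F f k) := (hpow f k).continuous

lemma F_symm (f : X ≃ₜ X) (k : ℤ) (x : X) : F f.symm k x = F f (-k) x := by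
  have h : f.symm.toEquiv = f.toEquiv⁻¹ := rfl
  simp only [F_apply', h, inv_zpow, ← zpow_neg]

lemma F_image (f : X ≃ₜ X) (a b : ℤ) (S : Set X) :
    F f a '' (F f b '' S) = F f (a+b) '' S := by
  rw [← Set.image_comp]
  exact Set.image_congr' (fun z => F_F f a b z)

lemma Ws_symm (f : X ≃ₜ X) (c : ℝ) (x : X) : Ws f.symm c x = Wu f c x := by
  ext y
  constructor
  · intro h k hk
    have := h (-k) (by omega)
    simpa only [F_symm, neg_neg] using this
  · intro h k hk
    have := h (-k) (by omega)
    simpa only [F_symm, neg_neg] using this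

lemma half {X : Type*} [MetricSpace X] [CompactSpace X] (f : X ≃ₜ X)
    (ε : ℝ) (hε : 0 < ε)
    (hcw : ∀ x : X, IsTotallyDisconnected (Ws f (2*ε) x ∩ Wu f (2*ε) x)) :
    ∀ r > (0:ℝ), ∃ k : ℕ, ∀ x : X, ∀ n : ℕ, k ≤ n →
      Metric.diam (F f n '' connectedComponentIn (Ws f ε x) x) ≤ r := by
  intro r hr
  by_contra hcon
  push_neg at hcon
  choose x n hn hd using hcon
  set C : ℕ → Set X := fun k => connectedComponentIn (Ws f ε (x k)) (x k) with hC
  have hxW : ∀ k, x k ∈ Ws f ε (x k) := by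
    intro k j hj
    simp only [dist_self]
    exact hε.le
  have hxC : ∀ k, x k ∈ C k := fun k => mem_connectedComponentIn (hxW k)
  have hKc : ∀ k, IsCompact (closure (F f (n k) '' C k)) := fun k =>
    isClosed_closure.isCompact
  set K : ℕ → NonemptyCompacts X := fun k =>
    ⟨⟨closure (F f (n k) '' C k), hKc k⟩,
      ⟨F f (n k) (x k), subset_closure ⟨x k, hxC k, rfl⟩⟩⟩ with hK
  have hKcoe : ∀ k, (K k : Set X) = closure (F f (n k) '' C k) := fun k => rfl
  have hKpre : ∀ k, IsPreconnected (K k : Set X) := by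
    intro k
    rw [hKcoe]
    exact (isPreconnected_connectedComponentIn.image _
      (F_continuous f (n k)).continuousOn).closure
  have hKd : ∀ k, r < Metric.diam (K k : Set X) := by
    intro k
    rw [hKcoe, Metric.diam_closure]
    exact hd k
  have hKsmall : ∀ k, ∀ m : ℤ, -(n k : ℤ) ≤ m → ∀ y ∈ (K k : Set X), ∀ z ∈ (K k : Set X),
      dist (F f m y) (F f m z) ≤ 2 * ε := by
    intro k m hm y hy z hz
    set T : Set X := F f (m + n k) '' C k with hT
    have hTd : ∀ a ∈ T, ∀ b ∈ T, dist a b ≤ 2 * ε := by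
      rintro _ ⟨a, ha, rfl⟩ _ ⟨b, hb, rfl⟩
      have ha' : a ∈ Ws f ε (x k) := connectedComponentIn_subset _ _ ha
      have hb' : b ∈ Ws f ε (x k) := connectedComponentIn_subset _ _ hb
      have h1 := ha' (m + n k) (by omega)
      have h2 := hb' (m + n k) (by omega)
      calc dist (F f (m + n k) a) (F f (m + n k) b)
          ≤ dist (F f (m + n k) a) (F f (m + n k) (x k)) +
              dist (F f (m + n k) (x k)) (F f (m + n k) b) := dist_triangle _ _ _
        _ ≤ ε + ε := add_le_add h1 (by rw [dist_comm]; exact h2)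
        _ = 2 * ε := by ring
    have himgsub : F f m '' (K k : Set X) ⊆ closure T := by
      rw [hKcoe]
      refine (image_closure_subset_closure_image (F_continuous f m)).trans ?_
      rw [F_image]
    have h1 : F f m y ∈ closure T := himgsub ⟨y, hy, rfl⟩
    have h2 : F f m z ∈ closure T := himgsub ⟨z, hz, rfl⟩
    have hdT : Metric.diam (closure T) ≤ 2 * ε := by
      rw [Metric.diam_closure]
      exact Metric.diam_le_of_forall_dist_le (by positivity) hTd
    exact le_trans (Metric.dist_le_diam_of_mem Metric.isBounded_of_compactSpace h1 h2) hdT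
  obtain ⟨L, -, φ, hφ, hconv⟩ := isCompact_univ.tendsto_subseq (x := K)
    (fun k => Set.mem_univ _)
  have hdist0 : Tendsto (fun i => dist (K (φ i)) L) atTop (𝓝 0) := by
    rw [← tendsto_iff_dist_tendsto_zero]
    exact hconv
  have hedist : ∀ i, EMetric.hausdorffEdist (K (φ i) : Set X) (L : Set X) ≠ ⊤ := fun i =>
    Metric.hausdorffEdist_ne_top_of_nonempty_of_bounded (K (φ i)).nonempty L.nonempty
      (K (φ i)).isCompact.isBounded L.isCompact.isBounded
  -- (a) any two points of L stay 2ε-close under all iterates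
  have hL2ε : ∀ y ∈ (L : Set X), ∀ z ∈ (L : Set X), ∀ m : ℤ,
      dist (F f m y) (F f m z) ≤ 2 * ε := by
    intro y hy z hz m
    have hchoice : ∀ i : ℕ, ∃ p ∈ (K (φ i) : Set X), ∃ q ∈ (K (φ i) : Set X),
        dist y p ≤ dist (K (φ i)) L ∧ dist z q ≤ dist (K (φ i)) L := by
      intro i
      obtain ⟨p, hp, hpd⟩ := (K (φ i)).isCompact.exists_infDist_eq_dist (K (φ i)).nonempty y
      obtain ⟨q, hq, hqd⟩ := (K (φ i)).isCompact.exists_infDist_eq_dist (K (φ i)).nonempty z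
      have hy' : Metric.infDist y (K (φ i) : Set X) ≤ dist (K (φ i)) L := by
        rw [NonemptyCompacts.dist_eq, Metric.hausdorffDist_comm]
        exact Metric.infDist_le_hausdorffDist_of_mem hy
          (by rw [EMetric.hausdorffEdist_comm]; exact hedist i)
      have hz' : Metric.infDist z (K (φ i) : Set X) ≤ dist (K (φ i)) L := by
        rw [NonemptyCompacts.dist_eq, Metric.hausdorffDist_comm]
        exact Metric.infDist_le_hausdorffDist_of_mem hz
          (by rw [EMetric.hausdorffEdist_comm]; exact hedist i)
      exact ⟨p, hp, q, hq, hpd ▸ hy', hqd ▸ hz'⟩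
    choose p hp q hq hpd hqd using hchoice
    have hdp : Tendsto p atTop (𝓝 y) := by
      rw [tendsto_iff_dist_tendsto_zero]
      exact squeeze_zero (fun i => dist_nonneg)
        (fun i => by rw [dist_comm]; exact hpd i) hdist0
    have hdq : Tendsto q atTop (𝓝 z) := by
      rw [tendsto_iff_dist_tendsto_zero]
      exact squeeze_zero (fun i => dist_nonneg)
        (fun i => by rw [dist_comm]; exact hqd i) hdist0
    have hev : ∀ᶠ i in atTop, dist (F f m (p i)) (F f m (q i)) ≤ 2 * ε := by
      filter_upwards [eventually_ge_atTop m.natAbs] with i hi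
      refine hKsmall (φ i) m ?_ (p i) (hp i) (q i) (hq i)
      have h1 : i ≤ φ i := hφ.le_apply
      have h2 : φ i ≤ n (φ i) := hn (φ i)
      have h3 : m.natAbs ≤ n (φ i) := le_trans hi (le_trans h1 h2)
      have h4 : (m.natAbs : ℤ) ≤ (n (φ i) : ℤ) := by exact_mod_cast h3
      omega
    have hlim : Tendsto (fun i => dist (F f m (p i)) (F f m (q i))) atTop
        (𝓝 (dist (F f m y) (F f m z))) :=
      (((F_continuous f m).tendsto y).comp hdp).dist
        (((F_continuous f m).tendsto z).comp hdq)
    exact le_of_tendsto hlim hev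
  -- (b) L is not a subsingleton
  have hLns : ¬ (L : Set X).Subsingleton := by
    intro hsub
    obtain ⟨p0, hp0⟩ := L.nonempty
    have hLsing : (L : Set X) = {p0} := hsub.eq_singleton_of_mem hp0
    obtain ⟨i, hi⟩ := (hdist0.eventually_lt_const (by positivity : (0:ℝ) < r/2)).exists
    have hdiam : Metric.diam (K (φ i) : Set X) ≤ 2 * (dist (K (φ i)) L) := by
      refine Metric.diam_le_of_forall_dist_le (by positivity) ?_
      intro a ha b hb
      have hda : dist a p0 ≤ dist (K (φ i)) L := by
        rw [NonemptyCompacts.dist_eq, hLsing]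
        have := Metric.infDist_le_hausdorffDist_of_mem ha (hedist i)
        rwa [hLsing, Metric.infDist_singleton] at this
      have hdb : dist b p0 ≤ dist (K (φ i)) L := by
        rw [NonemptyCompacts.dist_eq, hLsing]
        have := Metric.infDist_le_hausdorffDist_of_mem hb (hedist i)
        rwa [hLsing, Metric.infDist_singleton] at this
      calc dist a b ≤ dist a p0 + dist p0 b := dist_triangle _ _ _
        _ ≤ dist (K (φ i)) L + dist (K (φ i)) L := add_le_add hda (by rwa [dist_comm])
        _ = 2 * dist (K (φ i)) L := by ring
    have := hKd (φ i)
    linarith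
  -- (c) L is preconnected
  have hLpre : IsPreconnected (L : Set X) := by
    intro u v hu hv hsuv ⟨a, haL, hau⟩ ⟨b, hbL, hbv⟩
    by_contra hne
    rw [Set.not_nonempty_iff_eq_empty] at hne
    have hmem : ∀ w ∈ (L : Set X), w ∉ u ∩ v := by
      intro w hw hwuv
      exact absurd hne (Set.nonempty_iff_ne_empty.1 ⟨w, hw, hwuv⟩)
    set K1 : Set X := (L : Set X) ∩ uᶜ with hK1
    set K2 : Set X := (L : Set X) ∩ vᶜ with hK2
    have hK1c : IsCompact K1 := L.isCompact.inter_right hu.isClosed_compl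
    have hK2c : IsCompact K2 := L.isCompact.inter_right hv.isClosed_compl
    have hK1ne : K1.Nonempty := ⟨b, hbL, fun hbu => hmem b hbL ⟨hbu, hbv⟩⟩
    have hK2ne : K2.Nonempty := ⟨a, haL, fun hav => hmem a haL ⟨hau, hav⟩⟩
    have hdisj : Disjoint K1 K2 := by
      rw [Set.disjoint_left]
      rintro w ⟨hwL, hwu⟩ ⟨-, hwv⟩
      rcases hsuv hwL with h | h
      exacts [hwu h, hwv h]
    obtain ⟨δ, hδ, hthick⟩ := hdisj.exists_thickenings hK1c hK2c.isClosed
    obtain ⟨i, hi⟩ := (hdist0.eventually_lt_const hδ).exists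
    have hLsplit : (L : Set X) ⊆ K1 ∪ K2 := by
      intro w hw
      by_cases hwu : w ∈ u
      · exact Or.inr ⟨hw, fun hwv => hmem w hw ⟨hwu, hwv⟩⟩
      · exact Or.inl ⟨hw, hwu⟩
    have hKsub : (K (φ i) : Set X) ⊆ Metric.thickening δ K1 ∪ Metric.thickening δ K2 := by
      intro w hw
      have h1 : Metric.infDist w (L : Set X) ≤ dist (K (φ i)) L := by
        rw [NonemptyCompacts.dist_eq]
        exact Metric.infDist_le_hausdorffDist_of_mem hw (hedist i)
      have h2 : Metric.infDist w (L : Set X) < δ := lt_of_le_of_lt h1 hi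
      obtain ⟨w', hw', hww'⟩ := (Metric.infDist_lt_iff L.nonempty).1 h2
      rcases hLsplit hw' with h | h
      · exact Or.inl (Metric.mem_thickening_iff.2 ⟨w', h, hww'⟩)
      · exact Or.inr (Metric.mem_thickening_iff.2 ⟨w', h, hww'⟩)
    have hmeet : ∀ (Kj : Set X), Kj ⊆ (L : Set X) → Kj.Nonempty →
        ((K (φ i) : Set X) ∩ Metric.thickening δ Kj).Nonempty := by
      rintro Kj hKjL ⟨w, hwj⟩
      have h1 : Metric.infDist w (K (φ i) : Set X) ≤ dist (K (φ i)) L := by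
        rw [NonemptyCompacts.dist_eq, Metric.hausdorffDist_comm]
        exact Metric.infDist_le_hausdorffDist_of_mem (hKjL hwj)
          (by rw [EMetric.hausdorffEdist_comm]; exact hedist i)
      obtain ⟨w', hw', hww'⟩ := (Metric.infDist_lt_iff (K (φ i)).nonempty).1
        (lt_of_le_of_lt h1 hi)
      exact ⟨w', hw', Metric.mem_thickening_iff.2 ⟨w, hwj, by rwa [dist_comm]⟩⟩
    obtain ⟨w, -, hw1, hw2⟩ := hKpre (φ i) (Metric.thickening δ K1) (Metric.thickening δ K2)
      Metric.isOpen_thickening Metric.isOpen_thickening hKsub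
      (hmeet K1 (Set.inter_subset_left) hK1ne) (hmeet K2 (Set.inter_subset_left) hK2ne)
    exact Set.disjoint_left.1 hthick hw1 hw2
  -- conclude
  obtain ⟨y0, hy0⟩ := L.nonempty
  have hsub : (L : Set X) ⊆ Ws f (2*ε) y0 ∩ Wu f (2*ε) y0 := by
    intro z hz
    exact ⟨fun j _ => hL2ε z hz y0 hy0 j, fun j _ => hL2ε z hz y0 hy0 j⟩
  exact hLns (hcw y0 _ hsub hLpre)

end LS

/-- uniform contraction of stable/unstable continua of a cw-expansive
homeomorphism. -/
theorem stmt_8 {X : Type*} [MetricSpace X] [CompactSpace X] (f : X ≃ₜ X)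
    (ε : ℝ) (hε : 0 < ε)
    (hcw : ∀ x : X, IsTotallyDisconnected (LS.Ws f (2*ε) x ∩ LS.Wu f (2*ε) x)) :
    ∀ r > (0:ℝ), ∃ k : ℕ, ∀ x : X, ∀ n : ℕ, k ≤ n →
      Metric.diam (LS.F f n '' connectedComponentIn (LS.Ws f ε x) x) ≤ r ∧
      Metric.diam (LS.F f (-(n:ℤ)) '' connectedComponentIn (LS.Wu f ε x) x) ≤ r := by
  intro r hr
  have hcw' : ∀ x : X, IsTotallyDisconnected (LS.Ws f.symm (2*ε) x ∩ LS.Wu f.symm (2*ε) x) := by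
    intro x
    have h1 : LS.Ws f.symm (2*ε) x = LS.Wu f (2*ε) x := LS.Ws_symm f (2*ε) x
    have h2 : LS.Wu f.symm (2*ε) x = LS.Ws f (2*ε) x := by
      rw [← LS.Ws_symm f.symm (2*ε) x, Homeomorph.symm_symm]
    rw [h1, h2, Set.inter_comm]
    exact hcw x
  obtain ⟨k1, hk1⟩ := LS.half f ε hε hcw r hr
  obtain ⟨k2, hk2⟩ := LS.half f.symm ε hε hcw' r hr
  refine ⟨max k1 k2, fun x n hn => ⟨hk1 x n (le_trans (le_max_left _ _) hn), ?_⟩⟩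
  have h2 := hk2 x n (le_trans (le_max_right _ _) hn)
  have hW : LS.Ws f.symm ε x = LS.Wu f ε x := LS.Ws_symm f ε x
  have hFs : LS.F f.symm (n : ℤ) = LS.F f (-(n:ℤ)) := funext fun z => LS.F_symm f n z
  rwa [hW, hFs] at h2
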